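/- Let α > 0, β ∈ (0,1), ε > 0, and let I = [0, 2π] ⊂ ℝ. Then there exists a constant C = C(α, β, ε) > 0 such that for every F ≥ 0, every f : ℝ → ℝ satisfying |f(u) − f(v)| ≤ F|u−v|^β for all u, v ∈ ℝ, and every measurable g : I → ℝ, one has ∫_I ∫_I |f(g(x)) − f(g(y))|² / |x−y|^{1+2α} dx dy ≤ C·F²·(∫_I ∫_I |g(x) − g(y)|² / |x−y|^{1+2(α/β+ε)} dx dy)^β, where both sides are taken in [0,∞]. -/

import Mathlib

open MeasureTheory Set

/-- finiteness of `∫⁻ y in Icc 0 b, ofReal (|y| ^ r)` for `r > -1`. -/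
lemma stmt19aux_Icc_lt_top {r b : ℝ} (hr : (-1 : ℝ) < r) (hb : 0 ≤ b) :
    ∫⁻ y in Set.Icc (0 : ℝ) b, ENNReal.ofReal (|y| ^ r) < ⊤ := by
  have hcong : ∫⁻ y in Set.Icc (0 : ℝ) b, ENNReal.ofReal (|y| ^ r)
      = ∫⁻ y in Set.Icc (0 : ℝ) b, ENNReal.ofReal (y ^ r) := by
    refine setLIntegral_congr_fun measurableSet_Icc (fun y hy => ?_)
    rw [abs_of_nonneg hy.1]
  rw [hcong]
  have h1 : IntervalIntegrable (fun y : ℝ => y ^ r) volume 0 b :=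
    intervalIntegral.intervalIntegrable_rpow' hr
  rw [intervalIntegrable_iff_integrableOn_Ioc_of_le hb,
    ← integrableOn_Icc_iff_integrableOn_Ioc] at h1
  have h2 := h1.2
  rw [hasFiniteIntegral_iff_ofReal] at h2
  · exact h2
  · filter_upwards [ae_restrict_mem measurableSet_Icc] with y hy
    exact Real.rpow_nonneg hy.1 r

/-- finiteness of the double integral of `|x-y|^r` over `[0,a]²` for `r > -1`. -/
lemma stmt19aux_double_lt_top {r a : ℝ} (hr : (-1 : ℝ) < r) (ha : 0 ≤ a) :
    ∫⁻ x in Set.Icc (0 : ℝ) a, ∫⁻ y in Set.Icc (0 : ℝ) a,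
      ENNReal.ofReal (|x - y| ^ r) < ⊤ := by
  set J : ENNReal := ∫⁻ y in Set.Icc (-a) a, ENNReal.ofReal (|y| ^ r) with hJ
  have hneg : ∫⁻ y in Set.Icc (-a) (0 : ℝ), ENNReal.ofReal (|y| ^ r)
      = ∫⁻ y in Set.Icc (0 : ℝ) a, ENNReal.ofReal (|y| ^ r) := by
    have hmp : MeasurePreserving (fun y : ℝ => -y) volume volume :=
      Measure.measurePreserving_neg volume
    have hemb : MeasurableEmbedding (fun y : ℝ => -y) :=
      (MeasurableEquiv.neg ℝ).measurableEmbedding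
    have := hmp.setLIntegral_comp_preimage_emb hemb
      (fun t => ENNReal.ofReal (|t| ^ r)) (Set.Icc (0 : ℝ) a)
    have hpre : (fun y : ℝ => -y) ⁻¹' Set.Icc (0 : ℝ) a = Set.Icc (-a) 0 := by
      ext t; simp [neg_le, le_neg]
    rw [hpre] at this
    rw [← this]
    refine setLIntegral_congr_fun measurableSet_Icc (fun y _ => ?_)
    rw [abs_neg]
  have hJfin : J < ⊤ := by
    have hsub : Set.Icc (-a) a ⊆ Set.Icc (-a) 0 ∪ Set.Icc (0 : ℝ) a := by
      rw [Set.Icc_union_Icc_eq_Icc (by linarith) ha]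
    calc J ≤ ∫⁻ y in Set.Icc (-a) 0 ∪ Set.Icc (0 : ℝ) a,
            ENNReal.ofReal (|y| ^ r) := lintegral_mono_set hsub
      _ ≤ (∫⁻ y in Set.Icc (-a) (0 : ℝ), ENNReal.ofReal (|y| ^ r))
            + ∫⁻ y in Set.Icc (0 : ℝ) a, ENNReal.ofReal (|y| ^ r) :=
          lintegral_union_le _ _ _
      _ < ⊤ := by
          rw [hneg]
          exact ENNReal.add_lt_top.2 ⟨stmt19aux_Icc_lt_top hr ha, stmt19aux_Icc_lt_top hr ha⟩
  have hinner : ∀ x ∈ Set.Icc (0 : ℝ) a,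
      (∫⁻ y in Set.Icc (0 : ℝ) a, ENNReal.ofReal (|x - y| ^ r)) ≤ J := by
    intro x hx
    have hmp : MeasurePreserving (fun y : ℝ => y - x) volume volume :=
      measurePreserving_sub_right volume x
    have hemb : MeasurableEmbedding (fun y : ℝ => y - x) :=
      (MeasurableEquiv.subRight x).measurableEmbedding
    have hkey := hmp.setLIntegral_comp_preimage_emb hemb
      (fun t => ENNReal.ofReal (|t| ^ r)) (Set.Icc (-a) a)
    have hpre : (fun y : ℝ => y - x) ⁻¹' Set.Icc (-a) a = Set.Icc (-a + x) (a + x) :=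
      Set.preimage_sub_const_Icc ..
    rw [hpre] at hkey
    calc (∫⁻ y in Set.Icc (0 : ℝ) a, ENNReal.ofReal (|x - y| ^ r))
        = ∫⁻ y in Set.Icc (0 : ℝ) a, ENNReal.ofReal (|y - x| ^ r) := by
          refine setLIntegral_congr_fun measurableSet_Icc (fun y _ => ?_)
          rw [abs_sub_comm]
      _ ≤ ∫⁻ y in Set.Icc (-a + x) (a + x), ENNReal.ofReal (|y - x| ^ r) := by
          refine lintegral_mono_set (Set.Icc_subset_Icc (by linarith [hx.2]) (by linarith [hx.1]))
      _ = J := hkey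
  calc (∫⁻ x in Set.Icc (0 : ℝ) a, ∫⁻ y in Set.Icc (0 : ℝ) a, ENNReal.ofReal (|x - y| ^ r))
      ≤ ∫⁻ _x in Set.Icc (0 : ℝ) a, J := setLIntegral_mono' measurableSet_Icc hinner
    _ = J * volume (Set.Icc (0 : ℝ) a) := setLIntegral_const _ _
    _ < ⊤ := ENNReal.mul_lt_top hJfin measure_Icc_lt_top

lemma stmt19aux_pointwise {α β ε F : ℝ} (hα : 0 < α) (hβ0 : 0 < β) (hβ1 : β < 1)
    (hε : 0 < ε) (hF : 0 ≤ F) {f g : ℝ → ℝ}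
    (hf : ∀ u v : ℝ, |f u - f v| ≤ F * |u - v| ^ β) (x y : ℝ) :
    ENNReal.ofReal (|f (g x) - f (g y)| ^ 2) / ENNReal.ofReal (|x - y| ^ (1 + 2 * α))
      ≤ ENNReal.ofReal (F ^ 2) *
        ((ENNReal.ofReal (|g x - g y| ^ 2)
            / ENNReal.ofReal (|x - y| ^ (1 + 2 * (α / β + ε)))) ^ β
          * ENNReal.ofReal (|x - y| ^ (β - 1 + 2 * ε * β))) := by
  rcases eq_or_ne x y with rfl | hxy
  · simp
  have hb : 0 < |x - y| := abs_pos.2 (sub_ne_zero.2 hxy)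
  set b := |x - y| with hbdef
  set r := |g x - g y| with hrdef
  have hr : 0 ≤ r := abs_nonneg _
  set c : ℝ := 1 + 2 * (α / β + ε) with hcdef
  set p0 : ℝ := β - 1 + 2 * ε * β with hp0def
  -- Step 1 : Hölder bound on the numerator
  have s1 : |f (g x) - f (g y)| ^ 2 ≤ F ^ 2 * r ^ (2 * β) := by
    have h1 : |f (g x) - f (g y)| ^ 2 ≤ (F * r ^ β) ^ 2 :=
      pow_le_pow_left₀ (abs_nonneg _) (hf _ _) 2
    have h2 : (r ^ β) ^ 2 = r ^ (2 * β) := by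
      rw [← Real.rpow_natCast (r ^ β) 2, ← Real.rpow_mul hr]
      norm_num [mul_comm]
    calc |f (g x) - f (g y)| ^ 2 ≤ (F * r ^ β) ^ 2 := h1
      _ = F ^ 2 * r ^ (2 * β) := by rw [mul_pow, h2]
  -- real identity
  have hcβ : c * β = β + 2 * α + 2 * ε * β := by
    rw [hcdef, show (1 + 2 * (α / β + ε)) * β = β + 2 * (α / β * β) + 2 * ε * β by ring,
      div_mul_cancel₀ _ hβ0.ne']
  have hid : F ^ 2 * r ^ (2 * β) / b ^ (1 + 2 * α)
      = F ^ 2 * ((r ^ 2 / b ^ c) ^ β * b ^ p0) := by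
    have e1 : (r ^ 2 / b ^ c) ^ β = r ^ (2 * β) / b ^ (c * β) := by
      rw [Real.div_rpow (sq_nonneg r) (Real.rpow_nonneg hb.le c),
        ← Real.rpow_natCast r 2, ← Real.rpow_mul hr, ← Real.rpow_mul hb.le]
      norm_num [mul_comm]
    have e2 : b ^ p0 / b ^ (c * β) = (b ^ (1 + 2 * α))⁻¹ := by
      rw [← Real.rpow_sub hb, show p0 - c * β = -(1 + 2 * α) by rw [hcβ, hp0def]; ring,
        Real.rpow_neg hb.le]
    have hcb : b ^ (c * β) ≠ 0 := (Real.rpow_pos_of_pos hb _).ne'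
    rw [e1]
    rw [div_mul_eq_mul_div, mul_comm (r ^ (2*β)) (b ^ p0), ← mul_div_assoc, mul_div_assoc (F^2),
      mul_div_assoc, mul_comm (b ^ p0), mul_div_assoc, e2]
    ring
  -- assemble in ℝ≥0∞
  have hXnn : 0 ≤ r ^ 2 / b ^ c := div_nonneg (sq_nonneg r) (Real.rpow_nonneg hb.le c)
  calc ENNReal.ofReal (|f (g x) - f (g y)| ^ 2) / ENNReal.ofReal (b ^ (1 + 2 * α))
      ≤ ENNReal.ofReal (F ^ 2 * r ^ (2 * β)) / ENNReal.ofReal (b ^ (1 + 2 * α)) := by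
        exact ENNReal.div_le_div_right (ENNReal.ofReal_le_ofReal s1) _
    _ = ENNReal.ofReal (F ^ 2 * r ^ (2 * β) / b ^ (1 + 2 * α)) :=
        (ENNReal.ofReal_div_of_pos (Real.rpow_pos_of_pos hb _)).symm
    _ = ENNReal.ofReal (F ^ 2 * ((r ^ 2 / b ^ c) ^ β * b ^ p0)) := by rw [hid]
    _ = ENNReal.ofReal (F ^ 2) *
          ((ENNReal.ofReal (r ^ 2) / ENNReal.ofReal (b ^ c)) ^ β
            * ENNReal.ofReal (b ^ p0)) := by
        rw [ENNReal.ofReal_mul (sq_nonneg F), ENNReal.ofReal_mul (Real.rpow_nonneg hXnn β),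
          ← ENNReal.ofReal_rpow_of_nonneg hXnn hβ0.le,
          ENNReal.ofReal_div_of_pos (Real.rpow_pos_of_pos hb _)]

/-- Slobodeckij-seminorm composition estimate (Proposition 2.1 (iii) of the paper):
for `α > 0`, `β ∈ (0,1)`, `ε > 0` there is `C > 0` such that for every `β`-Hölder `f`
with constant `F` and every measurable `g`,
`∬_{I×I} |f(g(x))−f(g(y))|²/|x−y|^{1+2α} ≤ C F² (∬_{I×I} |g(x)−g(y)|²/|x−y|^{1+2(α/β+ε)})^β`
with `I = [0,2π]`. -/
theorem stmt19 (α β ε : ℝ) (hα : 0 < α) (hβ0 : 0 < β) (hβ1 : β < 1) (hε : 0 < ε) :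
    ∃ C : ℝ, 0 < C ∧
      ∀ F : ℝ, 0 ≤ F → ∀ f : ℝ → ℝ,
        (∀ u v : ℝ, |f u - f v| ≤ F * |u - v| ^ β) →
        ∀ g : ℝ → ℝ, Measurable g →
          (∫⁻ x in Set.Icc (0 : ℝ) (2 * Real.pi), ∫⁻ y in Set.Icc (0 : ℝ) (2 * Real.pi),
              ENNReal.ofReal (|f (g x) - f (g y)| ^ 2)
                / ENNReal.ofReal (|x - y| ^ (1 + 2 * α)))
            ≤ ENNReal.ofReal (C * F ^ 2) *
              (∫⁻ x in Set.Icc (0 : ℝ) (2 * Real.pi), ∫⁻ y in Set.Icc (0 : ℝ) (2 * Real.pi),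
                  ENNReal.ofReal (|g x - g y| ^ 2)
                    / ENNReal.ofReal (|x - y| ^ (1 + 2 * (α / β + ε)))) ^ β := by
  have h1β : 0 < 1 - β := by linarith
  set I : Set ℝ := Set.Icc (0 : ℝ) (2 * Real.pi) with hIdef
  set δ : ℝ := 2 * ε * β / (1 - β) with hδdef
  have hδ : 0 < δ := by positivity
  set κ : ENNReal := ∫⁻ x in I, ∫⁻ y in I, ENNReal.ofReal (|x - y| ^ (-1 + δ)) with hκdef
  have hκ : κ < ⊤ :=
    stmt19aux_double_lt_top (by linarith) (by positivity)
  set C : ℝ := κ.toReal ^ (1 - β) + 1 with hCdef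
  have hC : 0 < C := by positivity
  refine ⟨C, hC, ?_⟩
  intro F hF f hf g hg
  set c : ℝ := 1 + 2 * (α / β + ε) with hcdef
  set p0 : ℝ := β - 1 + 2 * ε * β with hp0def
  set ν : Measure (ℝ × ℝ) := (volume.restrict I).prod (volume.restrict I) with hνdef
  set hh : ℝ × ℝ → ENNReal := fun z =>
    ENNReal.ofReal (|g z.1 - g z.2| ^ 2) / ENNReal.ofReal (|z.1 - z.2| ^ c) with hhdef
  set ww : ℝ × ℝ → ENNReal := fun z => ENNReal.ofReal (|z.1 - z.2| ^ p0) with hwwdef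
  -- measurability
  have hsubm : Measurable fun z : ℝ × ℝ => |z.1 - z.2| :=
    (measurable_fst.sub measurable_snd).abs
  have hrpm : ∀ r : ℝ, Measurable fun z : ℝ × ℝ => ENNReal.ofReal (|z.1 - z.2| ^ r) := by
    intro r
    apply Measurable.ennreal_ofReal
    exact Measurable.comp (by measurability : Measurable fun t : ℝ => t ^ r) hsubm
  have hhm : Measurable hh := by
    rw [hhdef]
    exact (((hg.comp measurable_fst).sub (hg.comp measurable_snd)).abs.pow_const 2).ennreal_ofReal.div
      (hrpm c)
  have hwwm : Measurable ww := by rw [hwwdef]; exact hrpm p0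
  have hvm : Measurable fun z : ℝ × ℝ => ENNReal.ofReal (|z.1 - z.2| ^ (-1 + δ)) := hrpm _
  -- conjugate exponents
  have hpq : Real.HolderConjugate (1 / β) (1 / (1 - β)) := by
    exact Real.holderConjugate_one_div hβ0 h1β (by ring)
  -- Hölder
  have holder := ENNReal.lintegral_mul_le_Lp_mul_Lq ν hpq
    ((hhm.pow_const β).aemeasurable) hwwm.aemeasurable
  have hsimp1 : ∀ a : ℝ × ℝ, (hh a ^ β) ^ (1 / β) = hh a := fun a => by
    rw [← ENNReal.rpow_mul, mul_one_div_cancel hβ0.ne', ENNReal.rpow_one]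
  have hexp : p0 * (1 / (1 - β)) = -1 + δ := by
    rw [hp0def, hδdef]; field_simp; try ring
  have hsimp2 : ∀ a : ℝ × ℝ, ww a ^ (1 / (1 - β))
      = ENNReal.ofReal (|a.1 - a.2| ^ (-1 + δ)) := fun a => by
    rw [hwwdef]
    rw [ENNReal.ofReal_rpow_of_nonneg (Real.rpow_nonneg (abs_nonneg _) _)
      (by positivity : (0 : ℝ) ≤ 1 / (1 - β)), ← Real.rpow_mul (abs_nonneg _), hexp]
  simp only [hsimp1, hsimp2, one_div_one_div] at holder
  -- identify the product integrals with the iterated ones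
  have hDprod : (∫⁻ z, hh z ∂ν)
      = ∫⁻ x in I, ∫⁻ y in I,
          ENNReal.ofReal (|g x - g y| ^ 2) / ENNReal.ofReal (|x - y| ^ c) :=
    lintegral_prod _ hhm.aemeasurable
  have hκprod : (∫⁻ z, ENNReal.ofReal (|z.1 - z.2| ^ (-1 + δ)) ∂ν) = κ :=
    lintegral_prod _ hvm.aemeasurable
  rw [hDprod, hκprod] at holder
  -- bound κ ^ (1-β) by ofReal C
  have hκC : κ ^ (1 - β) ≤ ENNReal.ofReal C := by
    conv_lhs => rw [← ENNReal.ofReal_toReal hκ.ne]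
    rw [ENNReal.ofReal_rpow_of_nonneg ENNReal.toReal_nonneg (by linarith)]
    exact ENNReal.ofReal_le_ofReal (by rw [hCdef]; linarith)
  set D : ENNReal := ∫⁻ x in I, ∫⁻ y in I,
    ENNReal.ofReal (|g x - g y| ^ 2) / ENNReal.ofReal (|x - y| ^ c) with hDdef
  calc (∫⁻ x in I, ∫⁻ y in I,
        ENNReal.ofReal (|f (g x) - f (g y)| ^ 2) / ENNReal.ofReal (|x - y| ^ (1 + 2 * α)))
      ≤ ∫⁻ x in I, ∫⁻ y in I, ENNReal.ofReal (F ^ 2) * (hh (x, y) ^ β * ww (x, y)) :=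
        lintegral_mono fun x => lintegral_mono fun y =>
          stmt19aux_pointwise hα hβ0 hβ1 hε hF hf x y
    _ = ∫⁻ z, ENNReal.ofReal (F ^ 2) * (hh z ^ β * ww z) ∂ν :=
        (lintegral_prod _ (((hhm.pow_const β).mul hwwm).const_mul _).aemeasurable).symm
    _ = ENNReal.ofReal (F ^ 2) * ∫⁻ z, hh z ^ β * ww z ∂ν :=
        lintegral_const_mul _ ((hhm.pow_const β).mul hwwm)
    _ ≤ ENNReal.ofReal (F ^ 2) * (D ^ β * κ ^ (1 - β)) := by
        exact mul_le_mul_right holder _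
    _ ≤ ENNReal.ofReal (F ^ 2) * (D ^ β * ENNReal.ofReal C) :=
        mul_le_mul_right (mul_le_mul_right hκC _) _
    _ = ENNReal.ofReal (C * F ^ 2) * D ^ β := by
        rw [ENNReal.ofReal_mul hC.le]; ring
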